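/- For real x, y, ρ, q, k with |q| < 1, 0 < 1-q, (1-q)x² ≤ 4 and (1-q)y² ≤ 4 and |ρ| < 1: (1-ρ²q^{2k})² - (1-q)ρq^k(1+ρ²q^{2k})xy + (1-q)ρ²(x²+y²)q^{2k} ≤ (1 + ρ²q^{2k} + √(1-q)·|ρy|·|q|^k)². -/
import Mathlib


open Finset

noncomputable section

/-- q-number [n]_q = 1 + q + ... + q^{n-1} -/
def qNum (q : ℝ) (n : ℕ) : ℝ := ∑ i ∈ Finset.range n, q ^ i

/-- q-factorial [n]_q! -/
def qFact (q : ℝ) (n : ℕ) : ℝ := ∏ i ∈ Finset.range n, qNum q (i + 1)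

/-- Gaussian binomial coefficient -/
def qBinom (q : ℝ) (n k : ℕ) : ℝ :=
  if k ≤ n then qFact q n / (qFact q (n - k) * qFact q k) else 0

/-- q-Hermite polynomials H_n(x|q) -/
def qHermite (q x : ℝ) : ℕ → ℝ
  | 0 => 1
  | 1 => x
  | n + 2 => x * qHermite q x (n + 1) - qNum q (n + 1) * qHermite q x n

/-- Chebyshev polynomials of the second kind -/
def chebU (x : ℝ) : ℕ → ℝ
  | 0 => 1
  | 1 => 2 * x
  | n + 2 => 2 * x * chebU x (n + 1) - chebU x n

/-- probabilistic Hermite polynomials He_n -/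
def hermiteHe (x : ℝ) : ℕ → ℝ
  | 0 => 1
  | 1 => x
  | n + 2 => x * hermiteHe x (n + 1) - (n + 1 : ℝ) * hermiteHe x n

/-- Al-Salam–Chihara polynomials P_n(x|y,ρ,q) -/
def ascP (q y ρ x : ℝ) : ℕ → ℝ
  | 0 => 1
  | 1 => x - ρ * y
  | n + 2 => (x - ρ * y * q ^ (n + 1)) * ascP q y ρ x (n + 1)
      - (1 - ρ ^ 2 * q ^ n) * qNum q (n + 1) * ascP q y ρ x n


theorem quadratic_bound (x y ρ q : ℝ) (k : ℕ) (hq : |q| < 1) (hq1 : 0 < 1 - q)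
    (hx : (1 - q) * x ^ 2 ≤ 4) (hy : (1 - q) * y ^ 2 ≤ 4) (hρ : |ρ| < 1) :
    (1 - ρ ^ 2 * q ^ (2 * k)) ^ 2 - (1 - q) * ρ * q ^ k * (1 + ρ ^ 2 * q ^ (2 * k)) * x * y +
        (1 - q) * ρ ^ 2 * (x ^ 2 + y ^ 2) * q ^ (2 * k) ≤
      (1 + ρ ^ 2 * q ^ (2 * k) + Real.sqrt (1 - q) * |ρ * y| * |q| ^ k) ^ 2 := by

  set s := Real.sqrt (1 - q) with hsdef
  set b := ρ * q ^ k with hbdef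
  have hs0 : 0 ≤ s := Real.sqrt_nonneg _
  have hs2 : s ^ 2 = 1 - q := Real.sq_sqrt hq1.le
  have hq2k : q ^ (2 * k) = (q ^ k) ^ 2 := by rw [← pow_mul, Nat.mul_comm]
  have hPdef : s * |ρ * y| * |q| ^ k = s * |b * y| := by
    rw [hbdef, ← abs_pow, mul_assoc, ← abs_mul]
    ring_nf
  rw [hq2k, hPdef]
  set P := s * |b * y| with hP
  have hP0 : 0 ≤ P := mul_nonneg hs0 (abs_nonneg _)
  have hP2 : P ^ 2 = (1 - q) * (b * y) ^ 2 := by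
    rw [hP, mul_pow, hs2, sq_abs]
  have hsx : s * |x| ≤ 2 := by
    nlinarith [mul_nonneg hs0 (abs_nonneg x), sq_abs x, hs2, sq_nonneg (s * |x| - 2)]
  have key1 : (1 - q) * b ^ 2 * x ^ 2 ≤ 4 * b ^ 2 := by
    nlinarith [sq_nonneg b, hx]
  have key2 : -((1 - q) * b * (1 + b ^ 2) * x * y) ≤ 2 * (1 + b ^ 2) * P := by
    have h1 : -(b * x * y) ≤ |x| * |b * y| := by
      calc -(b * x * y) ≤ |b * x * y| := neg_le_abs _
        _ = |x * (b * y)| := by ring_nf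
        _ = |x| * |b * y| := abs_mul _ _
    have h2 : (1 - q) * (|x| * |b * y|) ≤ 2 * P := by
      have : (1 - q) * (|x| * |b * y|) = (s * |x|) * (s * |b * y|) := by
        rw [← hs2]; ring
      rw [this]
      have := mul_nonneg hs0 (abs_nonneg (b * y))
      nlinarith
    have hb1 : (0:ℝ) ≤ 1 + b ^ 2 := by positivity
    nlinarith [mul_le_mul_of_nonneg_left h2 hb1,
      mul_le_mul_of_nonneg_left h1 (mul_nonneg hq1.le hb1)]
  have hbb : ρ ^ 2 * (q ^ k) ^ 2 = b ^ 2 := by rw [hbdef]; ring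
  rw [hbb]
  have e1 : (1 - q) * ρ * q ^ k * (1 + b ^ 2) * x * y
      = (1 - q) * b * (1 + b ^ 2) * x * y := by rw [hbdef]; ring
  have e2 : (1 - q) * ρ ^ 2 * (x ^ 2 + y ^ 2) * (q ^ k) ^ 2
      = (1 - q) * b ^ 2 * x ^ 2 + (1 - q) * (b * y) ^ 2 := by rw [hbdef]; ring
  rw [e1, e2, ← hP2]
  have expand : (1 + b ^ 2 + P) ^ 2 = (1 - b ^ 2) ^ 2 + 4 * b ^ 2 + 2 * (1 + b ^ 2) * P + P ^ 2 := by
    ring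
  linarith [key1, key2]
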